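/- arXiv:2210.13208 — 2 statements merged into one kernel-verified Lean document; each statement's English description precedes it below -/
import Mathlib

section
/- For T, S ∈ B_{A^{1/2}}(H) and λ ∈ [0,1], the equality ‖T+S‖_{(A,λ)} = ‖T‖_{(A,λ)} + ‖S‖_{(A,λ)} holds if and only if there exists a sequence {x_n} of A-unit vectors in H such that lim_{n→∞} ( λ⟨Sx_n, Tx_n⟩_A + (1−λ)⟨x_n, Tx_n⟩_A ⟨Sx_n, x_n⟩_A ) = ‖T‖_{(A,λ)}·‖S‖_{(A,λ)} (the limit of the complex-valued expression equals this real number). -/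
open Filter Topology

open ComplexConjugate

set_option linter.unusedSectionVars false
set_option linter.unusedVariables false


variable {H : Type*}

/-- The `A`-semi-inner product, paper convention (linear in the first argument):
`⟨x, y⟩_A = ⟨Ax, y⟩`. -/
noncomputable def innA [NormedAddCommGroup H] [InnerProductSpace ℂ H]
    (A : H →L[ℂ] H) (x y : H) : ℂ :=
  @inner ℂ H _ y (A x)

/-- The seminorm `‖x‖_A = √⟨Ax, x⟩`. -/
noncomputable def normA [NormedAddCommGroup H] [InnerProductSpace ℂ H]
    (A : H →L[ℂ] H) (x : H) : ℝ :=
  Real.sqrt (innA A x x).re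

/-- The quantity `√(λ‖Tx‖_A² + (1−λ)|⟨Tx,x⟩_A|²)`. -/
noncomputable def qA [NormedAddCommGroup H] [InnerProductSpace ℂ H]
    (A : H →L[ℂ] H) (l : ℝ) (T : H →L[ℂ] H) (x : H) : ℝ :=
  Real.sqrt (l * normA A (T x) ^ 2 + (1 - l) * ‖innA A (T x) x‖ ^ 2)

/-- The seminorm `‖T‖_{(A,λ)}`. -/
noncomputable def semNormA [NormedAddCommGroup H] [InnerProductSpace ℂ H]
    (A : H →L[ℂ] H) (l : ℝ) (T : H →L[ℂ] H) : ℝ :=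
  sSup {r : ℝ | ∃ x : H, normA A x = 1 ∧ r = qA A l T x}

section aux
variable [NormedAddCommGroup H] [InnerProductSpace ℂ H] [CompleteSpace H]
variable (A : H →L[ℂ] H)

lemma innA_self_nonneg (hA : A.IsPositive) (x : H) : 0 ≤ (innA A x x).re := by
  have := hA.re_inner_nonneg_right x
  simpa [innA, RCLike.re_to_complex] using this

lemma inner_A_swap (hA : A.IsPositive) (x y : H) :
    inner ℂ x (A y) = inner ℂ (A x) y := by
  have hadj : ContinuousLinearMap.adjoint A = A :=
    ContinuousLinearMap.isSelfAdjoint_iff'.mp hA.isSelfAdjoint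
  conv_rhs => rw [← hadj, ContinuousLinearMap.adjoint_inner_left]

lemma innA_swap (hA : A.IsPositive) (x y : H) : innA A y x = conj (innA A x y) := by
  rw [innA, innA, inner_A_swap A hA, ← inner_conj_symm]

lemma normA_sq (hA : A.IsPositive) (x : H) : normA A x ^ 2 = (innA A x x).re :=
  Real.sq_sqrt (innA_self_nonneg A hA x)

lemma normA_nonneg (x : H) : 0 ≤ normA A x := Real.sqrt_nonneg _

lemma sq_abs_innA_le (hA : A.IsPositive) (x y : H) :
    ‖innA A x y‖ ^ 2 ≤ (innA A x x).re * (innA A y y).re := by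
  set b : ℂ := innA A x y with hb
  set c : ℝ := ‖b‖ with hc
  have hxy : inner ℂ x (A y) = conj b := by
    rw [inner_A_swap A hA, hb, innA, ← inner_conj_symm]
  have key : ∀ t : ℝ, 0 ≤ t ^ 2 * c ^ 2 * (innA A x x).re
      - 2 * t * c ^ 2 + (innA A y y).re := by
    intro t
    set z : ℂ := -(t : ℂ) * conj b with hz
    have expand : innA A (z • x + y) (z • x + y)
        = ((t : ℂ) ^ 2 * ((c ^ 2 : ℝ) : ℂ)) * innA A x x
          - 2 * (t : ℂ) * ((c ^ 2 : ℝ) : ℂ) + innA A y y := by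
      have hbb : b * conj b = ((c ^ 2 : ℝ) : ℂ) := by
        rw [Complex.mul_conj, hc]
        norm_cast
        rw [Complex.sq_norm]
      simp only [innA, map_add, map_smul, inner_add_left, inner_add_right,
        inner_smul_left, inner_smul_right, hz, hxy]
      simp only [map_mul, map_neg, Complex.conj_ofReal, Complex.conj_conj]
      rw [show inner ℂ y (A x) = b from rfl]
      linear_combination (↑t ^ 2 * inner ℂ x (A x) - 2 * ↑t) * hbb
    have h0 := innA_self_nonneg A hA (z • x + y)
    rw [expand] at h0
    have hre : (((t : ℂ) ^ 2 * ((c ^ 2 : ℝ) : ℂ)) * innA A x x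
        - 2 * (t : ℂ) * ((c ^ 2 : ℝ) : ℂ) + innA A y y).re
        = t ^ 2 * c ^ 2 * (innA A x x).re - 2 * t * c ^ 2 + (innA A y y).re := by
      have e : ((t : ℂ) ^ 2 * ((c ^ 2 : ℝ) : ℂ)) * innA A x x
          - 2 * (t : ℂ) * ((c ^ 2 : ℝ) : ℂ) + innA A y y
          = ((t ^ 2 * c ^ 2 : ℝ) : ℂ) * innA A x x - ((2 * t * c ^ 2 : ℝ) : ℂ)
            + innA A y y := by push_cast; ring
      rw [e]
      simp only [Complex.add_re, Complex.sub_re, Complex.re_ofReal_mul, Complex.ofReal_re]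
    rw [hre] at h0
    exact h0
  have hxx := innA_self_nonneg A hA x
  have hyy := innA_self_nonneg A hA y
  rcases eq_or_lt_of_le hxx with hx0 | hx0
  · by_contra hcon
    push_neg at hcon
    have hc2 : 0 < c ^ 2 := lt_of_le_of_lt (mul_nonneg hxx hyy) hcon
    have h := key (((innA A y y).re + 1) / (2 * c ^ 2))
    rw [← hx0] at h
    have ht : ((innA A y y).re + 1) / (2 * c ^ 2) * (2 * c ^ 2)
        = (innA A y y).re + 1 := div_mul_cancel₀ _ (by positivity)
    nlinarith [h, ht]
  · set β := (innA A x x).re with hβ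
    have hβne : β ≠ 0 := ne_of_gt hx0
    have h := key β⁻¹
    have e1 : β⁻¹ ^ 2 * c ^ 2 * β = β⁻¹ * c ^ 2 := by
      field_simp
    rw [e1] at h
    have h2 : β⁻¹ * c ^ 2 ≤ (innA A y y).re := by linarith
    have h3 := mul_le_mul_of_nonneg_left h2 (le_of_lt hx0)
    have e2 : β * (β⁻¹ * c ^ 2) = c ^ 2 := by field_simp
    rw [e2] at h3
    exact h3

lemma abs_innA_le (hA : A.IsPositive) (x y : H) :
    ‖innA A x y‖ ≤ normA A x * normA A y := by
  have h := sq_abs_innA_le A hA x y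
  have h2 := Real.sqrt_le_sqrt h
  rwa [Real.sqrt_sq (norm_nonneg _),
    Real.sqrt_mul (innA_self_nonneg A hA x)] at h2

variable {l : ℝ}

lemma qA_inside_nonneg (hl0 : 0 ≤ l) (hl1 : l ≤ 1) (T : H →L[ℂ] H) (x : H) :
    0 ≤ l * normA A (T x) ^ 2 + (1 - l) * ‖innA A (T x) x‖ ^ 2 :=
  add_nonneg (mul_nonneg hl0 (sq_nonneg _))
    (mul_nonneg (by linarith) (sq_nonneg _))

lemma qA_nonneg (T : H →L[ℂ] H) (x : H) : 0 ≤ qA A l T x := Real.sqrt_nonneg _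

lemma qA_sq (hl0 : 0 ≤ l) (hl1 : l ≤ 1) (T : H →L[ℂ] H) (x : H) :
    qA A l T x ^ 2
      = l * normA A (T x) ^ 2 + (1 - l) * ‖innA A (T x) x‖ ^ 2 :=
  Real.sq_sqrt (qA_inside_nonneg A hl0 hl1 T x)

lemma qA_le_normA (hA : A.IsPositive) (hl0 : 0 ≤ l) (hl1 : l ≤ 1)
    (T : H →L[ℂ] H) {x : H} (hx : normA A x = 1) :
    qA A l T x ≤ normA A (T x) := by
  have habs : ‖innA A (T x) x‖ ≤ normA A (T x) := by
    have := abs_innA_le A hA (T x) x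
    rwa [hx, mul_one] at this
  have hin : l * normA A (T x) ^ 2 + (1 - l) * ‖innA A (T x) x‖ ^ 2
      ≤ normA A (T x) ^ 2 := by
    have h' : ‖innA A (T x) x‖ ^ 2 ≤ normA A (T x) ^ 2 :=
      pow_le_pow_left₀ (norm_nonneg _) habs 2
    nlinarith [mul_le_mul_of_nonneg_left h' (by linarith : (0:ℝ) ≤ 1 - l)]
  calc qA A l T x ≤ Real.sqrt (normA A (T x) ^ 2) := Real.sqrt_le_sqrt hin
    _ = normA A (T x) := Real.sqrt_sq (normA_nonneg A (T x))

/-- the cross quantity -/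
noncomputable def EcalA (A : H →L[ℂ] H) (l : ℝ) (T S : H →L[ℂ] H) (x : H) : ℂ :=
  (l : ℂ) * innA A (S x) (T x)
    + ((1 : ℂ) - (l : ℂ)) * innA A x (T x) * innA A (S x) x

lemma re_EcalA (hA : A.IsPositive) (T S : H →L[ℂ] H) (x : H) :
    (EcalA A l T S x).re
      = l * (innA A (S x) (T x)).re
        + (1 - l) * (conj (innA A (T x) x) * innA A (S x) x).re := by
  rw [EcalA, show innA A x (T x) = conj (innA A (T x) x) from innA_swap A hA (T x) x,
    show ((1 : ℂ) - (l : ℂ)) = ((1 - l : ℝ) : ℂ) by push_cast; ring]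
  simp only [Complex.add_re, mul_assoc, Complex.re_ofReal_mul]

lemma normA_add_sq (hA : A.IsPositive) (u v : H) :
    normA A (u + v) ^ 2 = normA A u ^ 2 + normA A v ^ 2 + 2 * (innA A v u).re := by
  rw [normA_sq A hA, normA_sq A hA, normA_sq A hA]
  have he : innA A (u + v) (u + v)
      = innA A u u + innA A u v + innA A v u + innA A v v := by
    simp only [innA, map_add, inner_add_left, inner_add_right]
    ring
  rw [he]
  have hc : (innA A u v).re = (innA A v u).re := by
    rw [innA_swap A hA v u, Complex.conj_re]
  simp only [Complex.add_re]
  linarith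

lemma abs_add_sq_c (z w : ℂ) :
    ‖z + w‖ ^ 2
      = ‖z‖ ^ 2 + ‖w‖ ^ 2 + 2 * (conj z * w).re := by
  rw [Complex.sq_norm, Complex.sq_norm, Complex.sq_norm, Complex.normSq_add]
  have : (z * conj w).re = (conj z * w).re := by
    rw [← Complex.conj_re (z * conj w), map_mul, Complex.conj_conj]
  rw [this]

lemma innA_add_left (u v w : H) : innA A (u + v) w = innA A u w + innA A v w := by
  simp [innA, map_add, inner_add_right]

lemma q_add_sq (hA : A.IsPositive) (hl0 : 0 ≤ l) (hl1 : l ≤ 1)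
    (T S : H →L[ℂ] H) (x : H) :
    qA A l (T + S) x ^ 2
      = qA A l T x ^ 2 + qA A l S x ^ 2 + 2 * (EcalA A l T S x).re := by
  rw [qA_sq A hl0 hl1, qA_sq A hl0 hl1, qA_sq A hl0 hl1]
  have hTS : (T + S) x = T x + S x := rfl
  rw [hTS, normA_add_sq A hA, innA_add_left A, abs_add_sq_c, re_EcalA A hA]
  ring

lemma abs_EcalA_le (hA : A.IsPositive) (hl0 : 0 ≤ l) (hl1 : l ≤ 1)
    (T S : H →L[ℂ] H) {x : H} (hx : normA A x = 1) :
    ‖EcalA A l T S x‖ ≤ qA A l T x * qA A l S x := by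
  set a1 := normA A (T x) with ha1d
  set a2 := normA A (S x) with ha2d
  set b1 := ‖innA A (T x) x‖ with hb1d
  set b2 := ‖innA A (S x) x‖ with hb2d
  have ha1 : 0 ≤ a1 := normA_nonneg A _
  have ha2 : 0 ≤ a2 := normA_nonneg A _
  have hb1 : 0 ≤ b1 := norm_nonneg _
  have hb2 : 0 ≤ b2 := norm_nonneg _
  have hl1' : (0:ℝ) ≤ 1 - l := by linarith
  have h1 : ‖(l : ℂ) * innA A (S x) (T x)‖ ≤ l * (a2 * a1) := by
    rw [norm_mul, Complex.norm_real, Real.norm_eq_abs, abs_of_nonneg hl0]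
    exact mul_le_mul_of_nonneg_left (abs_innA_le A hA (S x) (T x)) hl0
  have h2 : ‖((1 : ℂ) - (l : ℂ)) * innA A x (T x) * innA A (S x) x‖
      = (1 - l) * (b1 * b2) := by
    rw [norm_mul, norm_mul,
      show ((1 : ℂ) - (l : ℂ)) = ((1 - l : ℝ) : ℂ) by push_cast; ring,
      Complex.norm_real, Real.norm_eq_abs, abs_of_nonneg hl1',
      show innA A x (T x) = conj (innA A (T x) x) from innA_swap A hA (T x) x,
      Complex.norm_conj]
    ring
  have htri : ‖EcalA A l T S x‖ ≤ l * (a2 * a1) + (1 - l) * (b1 * b2) := by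
    rw [EcalA]
    exact le_trans (norm_add_le _ _) (add_le_add h1 (le_of_eq h2))
  have hq : qA A l T x * qA A l S x
      = Real.sqrt ((l * a1 ^ 2 + (1 - l) * b1 ^ 2) * (l * a2 ^ 2 + (1 - l) * b2 ^ 2)) := by
    rw [qA, qA, ← Real.sqrt_mul (qA_inside_nonneg A hl0 hl1 T x)]
  rw [hq]
  refine le_trans htri (Real.le_sqrt_of_sq_le ?_)
  nlinarith [mul_nonneg (mul_nonneg hl0 hl1') (sq_nonneg (a1 * b2 - a2 * b1)),
    mul_nonneg ha1 ha2, mul_nonneg hb1 hb2]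

lemma q_triangle (hA : A.IsPositive) (hl0 : 0 ≤ l) (hl1 : l ≤ 1)
    (T S : H →L[ℂ] H) {x : H} (hx : normA A x = 1) :
    qA A l (T + S) x ≤ qA A l T x + qA A l S x := by
  have h1 := q_add_sq A hA hl0 hl1 T S x
  have h2 := abs_EcalA_le A hA hl0 hl1 T S hx
  have h3 : (EcalA A l T S x).re ≤ ‖EcalA A l T S x‖ :=
    Complex.re_le_norm _
  have hsq : qA A l (T + S) x ^ 2 ≤ (qA A l T x + qA A l S x) ^ 2 := by
    nlinarith [qA_nonneg A (l := l) T x, qA_nonneg A (l := l) S x]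
  calc qA A l (T + S) x = Real.sqrt (qA A l (T + S) x ^ 2) :=
        (Real.sqrt_sq (qA_nonneg A _ _)).symm
    _ ≤ Real.sqrt ((qA A l T x + qA A l S x) ^ 2) := Real.sqrt_le_sqrt hsq
    _ = qA A l T x + qA A l S x :=
        Real.sqrt_sq (add_nonneg (qA_nonneg A _ _) (qA_nonneg A _ _))

lemma tendsto_complex_of_re_im {f : ℕ → ℂ} {r : ℝ}
    (hre : Tendsto (fun n => (f n).re) atTop (𝓝 r))
    (him : Tendsto (fun n => (f n).im) atTop (𝓝 0)) :
    Tendsto f atTop (𝓝 ((r : ℝ) : ℂ)) := by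
  have h : Tendsto (fun n => (((f n).re : ℝ) : ℂ) + (((f n).im : ℝ) : ℂ) * Complex.I)
      atTop (𝓝 (((r : ℝ) : ℂ) + ((0 : ℝ) : ℂ) * Complex.I)) := by
    exact Tendsto.add ((Complex.continuous_ofReal.tendsto r).comp hre)
      (Tendsto.mul_const _ ((Complex.continuous_ofReal.tendsto 0).comp him))
  simp only [Complex.ofReal_zero, zero_mul, add_zero] at h
  exact h.congr fun n => Complex.re_add_im (f n)

end aux

theorem semNormA_add_eq_iff
    [NormedAddCommGroup H] [InnerProductSpace ℂ H] [CompleteSpace H]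
    (A : H →L[ℂ] H) (hA : A.IsPositive) {l : ℝ} (hl : l ∈ Set.Icc (0 : ℝ) 1)
    (T S : H →L[ℂ] H) (hT : BddAbove {r : ℝ | ∃ x : H, normA A x = 1 ∧ r = normA A (T x)}) (hS : BddAbove {r : ℝ | ∃ x : H, normA A x = 1 ∧ r = normA A (S x)})
    (hne : ∃ x : H, normA A x = 1) :
    semNormA A l (T + S) = semNormA A l T + semNormA A l S ↔
      ∃ x : ℕ → H, (∀ n, normA A (x n) = 1) ∧
        Tendsto (fun n => (l : ℂ) * innA A (S (x n)) (T (x n)) + ((1 : ℂ) - (l : ℂ)) * innA A (x n) (T (x n)) * innA A (S (x n)) (x n))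
          atTop (𝓝 ((semNormA A l T * semNormA A l S : ℝ) : ℂ)) := by
  obtain ⟨hl0, hl1⟩ := hl
  obtain ⟨x₀, hx₀⟩ := hne
  obtain ⟨MT, hMT⟩ := hT
  obtain ⟨MS, hMS⟩ := hS
  have bddT : BddAbove {r : ℝ | ∃ x : H, normA A x = 1 ∧ r = qA A l T x} := by
    refine ⟨MT, fun r hr => ?_⟩
    obtain ⟨x, hx, rfl⟩ := hr
    exact le_trans (qA_le_normA A hA hl0 hl1 T hx) (hMT ⟨x, hx, rfl⟩)
  have bddS : BddAbove {r : ℝ | ∃ x : H, normA A x = 1 ∧ r = qA A l S x} := by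
    refine ⟨MS, fun r hr => ?_⟩
    obtain ⟨x, hx, rfl⟩ := hr
    exact le_trans (qA_le_normA A hA hl0 hl1 S hx) (hMS ⟨x, hx, rfl⟩)
  have qT_le : ∀ x : H, normA A x = 1 → qA A l T x ≤ semNormA A l T :=
    fun x hx => le_csSup bddT ⟨x, hx, rfl⟩
  have qS_le : ∀ x : H, normA A x = 1 → qA A l S x ≤ semNormA A l S :=
    fun x hx => le_csSup bddS ⟨x, hx, rfl⟩
  have hα0 : 0 ≤ semNormA A l T := le_trans (qA_nonneg A T x₀) (qT_le x₀ hx₀)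
  have hβ0 : 0 ≤ semNormA A l S := le_trans (qA_nonneg A S x₀) (qS_le x₀ hx₀)
  have bddTS : BddAbove {r : ℝ | ∃ x : H, normA A x = 1 ∧ r = qA A l (T + S) x} := by
    refine ⟨semNormA A l T + semNormA A l S, fun r hr => ?_⟩
    obtain ⟨x, hx, rfl⟩ := hr
    exact le_trans (q_triangle A hA hl0 hl1 T S hx)
      (add_le_add (qT_le x hx) (qS_le x hx))
  have neTS : Set.Nonempty {r : ℝ | ∃ x : H, normA A x = 1 ∧ r = qA A l (T + S) x} :=
    ⟨qA A l (T + S) x₀, x₀, hx₀, rfl⟩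
  have qTS_le : ∀ x : H, normA A x = 1 → qA A l (T + S) x ≤ semNormA A l (T + S) :=
    fun x hx => le_csSup bddTS ⟨x, hx, rfl⟩
  have hle : semNormA A l (T + S) ≤ semNormA A l T + semNormA A l S := by
    refine csSup_le neTS ?_
    rintro r ⟨x, hx, rfl⟩
    exact le_trans (q_triangle A hA hl0 hl1 T S hx)
      (add_le_add (qT_le x hx) (qS_le x hx))
  constructor
  · intro heq
    obtain ⟨u, -, huT, humem⟩ := exists_seq_tendsto_sSup neTS bddTS
    simp only [Set.mem_setOf_eq] at humem
    choose x hx1 hx2 using humem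
    have hc : Tendsto (fun n => qA A l (T + S) (x n)) atTop
        (𝓝 (semNormA A l T + semNormA A l S)) := by
      have huT' : Tendsto u atTop (𝓝 (semNormA A l T + semNormA A l S)) := by
        rw [← heq]; exact huT
      exact huT'.congr fun n => hx2 n
    set a : ℕ → ℝ := fun n => qA A l T (x n) with had
    set b : ℕ → ℝ := fun n => qA A l S (x n) with hbd
    have hab_ge : ∀ n, qA A l (T + S) (x n) ≤ a n + b n :=
      fun n => q_triangle A hA hl0 hl1 T S (hx1 n)
    have haub : ∀ n, a n ≤ semNormA A l T := fun n => qT_le _ (hx1 n)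
    have hbub : ∀ n, b n ≤ semNormA A l S := fun n => qS_le _ (hx1 n)
    have hsum : Tendsto (fun n => a n + b n) atTop
        (𝓝 (semNormA A l T + semNormA A l S)) :=
      tendsto_of_tendsto_of_tendsto_of_le_of_le hc tendsto_const_nhds hab_ge
        (fun n => add_le_add (haub n) (hbub n))
    have hta : Tendsto a atTop (𝓝 (semNormA A l T)) := by
      have hlow : Tendsto (fun n => a n + b n - semNormA A l S) atTop
          (𝓝 (semNormA A l T)) := by
        have := hsum.sub (tendsto_const_nhds (x := semNormA A l S))
        simpa using this
      exact tendsto_of_tendsto_of_tendsto_of_le_of_le hlow tendsto_const_nhds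
        (fun n => by linarith [hbub n]) haub
    have htb : Tendsto b atTop (𝓝 (semNormA A l S)) := by
      have hlow : Tendsto (fun n => a n + b n - semNormA A l T) atTop
          (𝓝 (semNormA A l S)) := by
        have := hsum.sub (tendsto_const_nhds (x := semNormA A l T))
        have e : semNormA A l T + semNormA A l S - semNormA A l T
            = semNormA A l S := by ring
        rw [e] at this
        exact this
      exact tendsto_of_tendsto_of_tendsto_of_le_of_le hlow tendsto_const_nhds
        (fun n => by linarith [haub n]) hbub
    have hEre : ∀ n, (EcalA A l T S (x n)).re
        = (qA A l (T + S) (x n) ^ 2 - a n ^ 2 - b n ^ 2) / 2 := by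
      intro n
      have := q_add_sq A hA hl0 hl1 T S (x n)
      simp only [had, hbd]
      linarith
    have hre : Tendsto (fun n => (EcalA A l T S (x n)).re) atTop
        (𝓝 (semNormA A l T * semNormA A l S)) := by
      have h2 : Tendsto (fun n => (qA A l (T + S) (x n) ^ 2 - a n ^ 2 - b n ^ 2) / 2)
          atTop (𝓝 (((semNormA A l T + semNormA A l S) ^ 2 - semNormA A l T ^ 2
            - semNormA A l S ^ 2) / 2)) :=
        (((hc.pow 2).sub (hta.pow 2)).sub (htb.pow 2)).div_const 2
      have e : ((semNormA A l T + semNormA A l S) ^ 2 - semNormA A l T ^ 2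
          - semNormA A l S ^ 2) / 2 = semNormA A l T * semNormA A l S := by ring
      rw [e] at h2
      exact h2.congr fun n => (hEre n).symm
    have habs_le : ∀ n, ‖EcalA A l T S (x n)‖ ≤ a n * b n :=
      fun n => abs_EcalA_le A hA hl0 hl1 T S (hx1 n)
    have him : Tendsto (fun n => (EcalA A l T S (x n)).im) atTop (𝓝 0) := by
      have hsq : ∀ n, (EcalA A l T S (x n)).im ^ 2
          ≤ (a n * b n) ^ 2 - (EcalA A l T S (x n)).re ^ 2 := by
        intro n
        have h1 : (EcalA A l T S (x n)).re ^ 2 + (EcalA A l T S (x n)).im ^ 2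
            = ‖EcalA A l T S (x n)‖ ^ 2 := by
          rw [Complex.sq_norm, Complex.normSq_apply]; ring
        have h3 : ‖EcalA A l T S (x n)‖ ^ 2 ≤ (a n * b n) ^ 2 :=
          pow_le_pow_left₀ (norm_nonneg _) (habs_le n) 2
        linarith
      have hub : Tendsto (fun n => (a n * b n) ^ 2 - (EcalA A l T S (x n)).re ^ 2)
          atTop (𝓝 ((semNormA A l T * semNormA A l S) ^ 2
            - (semNormA A l T * semNormA A l S) ^ 2)) :=
        ((hta.mul htb).pow 2).sub (hre.pow 2)
      rw [sub_self] at hub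
      have him2 : Tendsto (fun n => (EcalA A l T S (x n)).im ^ 2) atTop (𝓝 0) :=
        tendsto_of_tendsto_of_tendsto_of_le_of_le tendsto_const_nhds hub
          (fun n => sq_nonneg _) hsq
      have habs : Tendsto (fun n => |(EcalA A l T S (x n)).im|) atTop (𝓝 0) := by
        have h := (Real.continuous_sqrt.tendsto 0).comp him2
        rw [Real.sqrt_zero] at h
        exact h.congr fun n => Real.sqrt_sq_eq_abs _
      have hneg := habs.neg
      rw [neg_zero] at hneg
      exact tendsto_of_tendsto_of_tendsto_of_le_of_le hneg habs
        (fun n => neg_abs_le _) (fun n => le_abs_self _)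
    exact ⟨x, hx1, tendsto_complex_of_re_im hre him⟩
  · rintro ⟨x, hx, hE⟩
    have hEE : (fun n => (l : ℂ) * innA A (S (x n)) (T (x n))
        + ((1 : ℂ) - (l : ℂ)) * innA A (x n) (T (x n)) * innA A (S (x n)) (x n))
        = fun n => EcalA A l T S (x n) := rfl
    rw [hEE] at hE
    by_cases hT0 : semNormA A l T = 0
    · have hq0 : ∀ y : H, normA A y = 1 → qA A l T y = 0 := fun y hy =>
        le_antisymm (hT0 ▸ qT_le y hy) (qA_nonneg A T y)
      have hqq : ∀ y : H, normA A y = 1 → qA A l (T + S) y = qA A l S y := by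
        intro y hy
        have h1 := q_add_sq A hA hl0 hl1 T S y
        have h2 := abs_EcalA_le A hA hl0 hl1 T S hy
        rw [hq0 y hy] at h1 h2
        simp only [zero_mul] at h2
        have h3 : (EcalA A l T S y).re = 0 := by
          have h4 := Complex.abs_re_le_norm (EcalA A l T S y)
          have h5 : |(EcalA A l T S y).re| = 0 :=
            le_antisymm (h4.trans h2) (abs_nonneg _)
          exact abs_eq_zero.mp h5
        rw [h3] at h1
        have h6 : qA A l (T + S) y ^ 2 = qA A l S y ^ 2 := by
          rw [h1]; ring
        calc qA A l (T + S) y = Real.sqrt (qA A l (T + S) y ^ 2) :=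
              (Real.sqrt_sq (qA_nonneg A _ _)).symm
          _ = Real.sqrt (qA A l S y ^ 2) := by rw [h6]
          _ = qA A l S y := Real.sqrt_sq (qA_nonneg A _ _)
      have hset : {r : ℝ | ∃ y : H, normA A y = 1 ∧ r = qA A l (T + S) y}
          = {r : ℝ | ∃ y : H, normA A y = 1 ∧ r = qA A l S y} := by
        ext r
        constructor
        · rintro ⟨y, hy, rfl⟩; exact ⟨y, hy, hqq y hy⟩
        · rintro ⟨y, hy, rfl⟩; exact ⟨y, hy, (hqq y hy).symm⟩
      rw [hT0, zero_add]
      show sSup _ = _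
      rw [hset]
      rfl
    by_cases hS0 : semNormA A l S = 0
    · have hq0 : ∀ y : H, normA A y = 1 → qA A l S y = 0 := fun y hy =>
        le_antisymm (hS0 ▸ qS_le y hy) (qA_nonneg A S y)
      have hqq : ∀ y : H, normA A y = 1 → qA A l (T + S) y = qA A l T y := by
        intro y hy
        have h1 := q_add_sq A hA hl0 hl1 T S y
        have h2 := abs_EcalA_le A hA hl0 hl1 T S hy
        rw [hq0 y hy] at h1 h2
        simp only [mul_zero] at h2
        have h3 : (EcalA A l T S y).re = 0 := by
          have h4 := Complex.abs_re_le_norm (EcalA A l T S y)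
          have h5 : |(EcalA A l T S y).re| = 0 :=
            le_antisymm (h4.trans h2) (abs_nonneg _)
          exact abs_eq_zero.mp h5
        rw [h3] at h1
        have h6 : qA A l (T + S) y ^ 2 = qA A l T y ^ 2 := by
          rw [h1]; ring
        calc qA A l (T + S) y = Real.sqrt (qA A l (T + S) y ^ 2) :=
              (Real.sqrt_sq (qA_nonneg A _ _)).symm
          _ = Real.sqrt (qA A l T y ^ 2) := by rw [h6]
          _ = qA A l T y := Real.sqrt_sq (qA_nonneg A _ _)
      have hset : {r : ℝ | ∃ y : H, normA A y = 1 ∧ r = qA A l (T + S) y}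
          = {r : ℝ | ∃ y : H, normA A y = 1 ∧ r = qA A l T y} := by
        ext r
        constructor
        · rintro ⟨y, hy, rfl⟩; exact ⟨y, hy, hqq y hy⟩
        · rintro ⟨y, hy, rfl⟩; exact ⟨y, hy, (hqq y hy).symm⟩
      rw [hS0, add_zero]
      show sSup _ = _
      rw [hset]
      rfl
    have hTpos : 0 < semNormA A l T := lt_of_le_of_ne hα0 (Ne.symm hT0)
    have hSpos : 0 < semNormA A l S := lt_of_le_of_ne hβ0 (Ne.symm hS0)
    set a : ℕ → ℝ := fun n => qA A l T (x n) with had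
    set b : ℕ → ℝ := fun n => qA A l S (x n) with hbd
    have hre : Tendsto (fun n => (EcalA A l T S (x n)).re) atTop
        (𝓝 (semNormA A l T * semNormA A l S)) := by
      have h := (Complex.continuous_re.tendsto _).comp hE
      simpa [Function.comp_def] using h
    have habs_le : ∀ n, ‖EcalA A l T S (x n)‖ ≤ a n * b n :=
      fun n => abs_EcalA_le A hA hl0 hl1 T S (hx n)
    have hre_le : ∀ n, (EcalA A l T S (x n)).re ≤ a n * b n :=
      fun n => (Complex.re_le_norm _).trans (habs_le n)
    have ha0 : ∀ n, 0 ≤ a n := fun n => qA_nonneg A T (x n)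
    have hb0 : ∀ n, 0 ≤ b n := fun n => qA_nonneg A S (x n)
    have haub : ∀ n, a n ≤ semNormA A l T := fun n => qT_le _ (hx n)
    have hbub : ∀ n, b n ≤ semNormA A l S := fun n => qS_le _ (hx n)
    have htb : Tendsto b atTop (𝓝 (semNormA A l S)) := by
      have hlow : Tendsto (fun n => (EcalA A l T S (x n)).re / semNormA A l T)
          atTop (𝓝 (semNormA A l S)) := by
        have h := hre.div_const (semNormA A l T)
        rwa [mul_div_cancel_left₀ _ (ne_of_gt hTpos)] at h
      refine tendsto_of_tendsto_of_tendsto_of_le_of_le hlow tendsto_const_nhds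
        (fun n => ?_) hbub
      rw [div_le_iff₀ hTpos]
      calc (EcalA A l T S (x n)).re ≤ a n * b n := hre_le n
        _ ≤ semNormA A l T * b n := mul_le_mul_of_nonneg_right (haub n) (hb0 n)
        _ = b n * semNormA A l T := mul_comm _ _
    have hta : Tendsto a atTop (𝓝 (semNormA A l T)) := by
      have hlow : Tendsto (fun n => (EcalA A l T S (x n)).re / semNormA A l S)
          atTop (𝓝 (semNormA A l T)) := by
        have h := hre.div_const (semNormA A l S)
        rwa [mul_div_assoc, div_self (ne_of_gt hSpos), mul_one] at h
      refine tendsto_of_tendsto_of_tendsto_of_le_of_le hlow tendsto_const_nhds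
        (fun n => ?_) haub
      rw [div_le_iff₀ hSpos]
      calc (EcalA A l T S (x n)).re ≤ a n * b n := hre_le n
        _ ≤ a n * semNormA A l S := mul_le_mul_of_nonneg_left (hbub n) (ha0 n)
    have hc : Tendsto (fun n => qA A l (T + S) (x n)) atTop
        (𝓝 (semNormA A l T + semNormA A l S)) := by
      have hcsq : ∀ n, qA A l (T + S) (x n)
          = Real.sqrt (a n ^ 2 + b n ^ 2 + 2 * (EcalA A l T S (x n)).re) := by
        intro n
        rw [← q_add_sq A hA hl0 hl1 T S (x n)]
        exact (Real.sqrt_sq (qA_nonneg A _ _)).symm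
      have hin : Tendsto (fun n => a n ^ 2 + b n ^ 2 + 2 * (EcalA A l T S (x n)).re)
          atTop (𝓝 (semNormA A l T ^ 2 + semNormA A l S ^ 2
            + 2 * (semNormA A l T * semNormA A l S))) :=
        ((hta.pow 2).add (htb.pow 2)).add (hre.const_mul 2)
      have h := (Real.continuous_sqrt.tendsto _).comp hin
      have e : Real.sqrt (semNormA A l T ^ 2 + semNormA A l S ^ 2
          + 2 * (semNormA A l T * semNormA A l S))
          = semNormA A l T + semNormA A l S := by
        rw [show semNormA A l T ^ 2 + semNormA A l S ^ 2
            + 2 * (semNormA A l T * semNormA A l S)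
            = (semNormA A l T + semNormA A l S) ^ 2 by ring]
        exact Real.sqrt_sq (by linarith)
      rw [e] at h
      exact h.congr fun n => (hcsq n).symm
    have hge : semNormA A l T + semNormA A l S ≤ semNormA A l (T + S) :=
      le_of_tendsto hc (Filter.Eventually.of_forall fun n => qTS_le _ (hx n))
    linarith
end

section
/- For bounded operators T, S on a complex Hilbert space H, T is Birkhoff–James numerical radius orthogonal to S (w(T+ξS) ≥ w(T) for all ξ ∈ ℂ) if and only if for each θ ∈ [0,2π) there exists a sequence {x_n} of unit vectors with lim_{n→∞} |⟨Tx_n, x_n⟩| = w(T) and liminf_{n→∞} Re( e^{iθ}⟨x_n, Tx_n⟩⟨Sx_n, x_n⟩ ) ≥ 0. -/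
open Filter Topology

/-- The numerical radius `w(T) = sup {|⟨Tx, x⟩| : ‖x‖ = 1}` (paper convention
`⟨Tx, x⟩` corresponds to Mathlib's `⟪ x, T x ⟫`). -/
noncomputable def numRad {H : Type*} [NormedAddCommGroup H] [InnerProductSpace ℂ H]
    (T : H →L[ℂ] H) : ℝ :=
  sSup {r : ℝ | ∃ x : H, ‖x‖ = 1 ∧ r = ‖(@inner ℂ H _ x (T x))‖}

section Aux

variable {H : Type*} [NormedAddCommGroup H] [InnerProductSpace ℂ H]

lemma cx_expand (a b e : ℂ) (he : ‖e‖ = 1) (t : ℝ) :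
    ‖(a + (↑t * e) * b)‖ ^ 2
      = ‖a‖ ^ 2 + t ^ 2 * ‖b‖ ^ 2
        + 2 * t * (e * ((starRingEnd ℂ) a * b)).re := by
  have h1 : e.re * e.re + e.im * e.im = 1 := by
    have := Complex.sq_norm e
    rw [he] at this
    simpa [Complex.normSq_apply, sq] using this.symm
  simp only [Complex.sq_norm, Complex.normSq_apply, Complex.add_re, Complex.add_im,
    Complex.mul_re, Complex.mul_im, Complex.ofReal_re, Complex.ofReal_im,
    Complex.conj_re, Complex.conj_im]
  linear_combination (t ^ 2 * (b.re * b.re + b.im * b.im)) * h1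

lemma abs_inner_le_opNorm (T : H →L[ℂ] H) {x : H} (hx : ‖x‖ = 1) :
    ‖(@inner ℂ H _ x (T x))‖ ≤ ‖T‖ := by
  calc ‖@inner ℂ H _ x (T x)‖ ≤ ‖x‖ * ‖T x‖ := norm_inner_le_norm x (T x)
    _ ≤ ‖x‖ * (‖T‖ * ‖x‖) := by gcongr; exact T.le_opNorm x
    _ = ‖T‖ := by rw [hx]; ring

lemma numRad_bdd (T : H →L[ℂ] H) :
    BddAbove {r : ℝ | ∃ x : H, ‖x‖ = 1 ∧ r = ‖(@inner ℂ H _ x (T x))‖} := by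
  refine ⟨‖T‖, ?_⟩
  rintro r ⟨x, hx, rfl⟩
  exact abs_inner_le_opNorm T hx

lemma le_numRad (T : H →L[ℂ] H) {x : H} (hx : ‖x‖ = 1) :
    ‖(@inner ℂ H _ x (T x))‖ ≤ numRad T :=
  le_csSup (numRad_bdd T) ⟨x, hx, rfl⟩

lemma numRad_le [Nontrivial H] (T : H →L[ℂ] H) {c : ℝ}
    (h : ∀ x : H, ‖x‖ = 1 → ‖(@inner ℂ H _ x (T x))‖ ≤ c) : numRad T ≤ c := by
  obtain ⟨x, hx⟩ := exists_norm_eq H zero_le_one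
  refine csSup_le ⟨_, x, hx, rfl⟩ ?_
  rintro r ⟨y, hy, rfl⟩
  exact h y hy

lemma numRad_nonneg [Nontrivial H] (T : H →L[ℂ] H) : 0 ≤ numRad T := by
  obtain ⟨x, hx⟩ := exists_norm_eq H zero_le_one
  exact le_trans (norm_nonneg _) (le_csSup (numRad_bdd T) ⟨x, hx, rfl⟩)

lemma r_bound (T S : H →L[ℂ] H) (θ : ℝ) {x : H} (hx : ‖x‖ = 1) :
    |(Complex.exp (θ * Complex.I) *
        (@inner ℂ H _ (T x) x * @inner ℂ H _ x (S x))).re| ≤ ‖T‖ * ‖S‖ := by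
  calc |(Complex.exp (θ * Complex.I) * (@inner ℂ H _ (T x) x * @inner ℂ H _ x (S x))).re|
      ≤ ‖(Complex.exp (θ * Complex.I) *
          (@inner ℂ H _ (T x) x * @inner ℂ H _ x (S x)))‖ := Complex.abs_re_le_norm _
    _ = ‖(@inner ℂ H _ (T x) x)‖ * ‖(@inner ℂ H _ x (S x))‖ := by
        rw [norm_mul, norm_mul, Complex.norm_exp_ofReal_mul_I, one_mul]
    _ ≤ ‖T‖ * ‖S‖ := by
        have h1 : ‖(@inner ℂ H _ (T x) x)‖ ≤ ‖T‖ := by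
          rw [← inner_conj_symm, Complex.norm_conj]
          simpa using abs_inner_le_opNorm T hx
        exact mul_le_mul h1 (abs_inner_le_opNorm S hx) (norm_nonneg _) (norm_nonneg T)

lemma key_expand (T S : H →L[ℂ] H) (t θ : ℝ) (x : H) :
    ‖(@inner ℂ H _ x ((T + ((t : ℂ) * Complex.exp (θ * Complex.I)) • S) x))‖ ^ 2
      = ‖(@inner ℂ H _ x (T x))‖ ^ 2
        + t ^ 2 * ‖(@inner ℂ H _ x (S x))‖ ^ 2
        + 2 * t * (Complex.exp (θ * Complex.I) *
            (@inner ℂ H _ (T x) x * @inner ℂ H _ x (S x))).re := by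
  have hi : @inner ℂ H _ x ((T + ((t : ℂ) * Complex.exp (θ * Complex.I)) • S) x)
      = @inner ℂ H _ x (T x)
        + ((t : ℂ) * Complex.exp (θ * Complex.I)) * @inner ℂ H _ x (S x) := by
    simp [inner_add_right, inner_smul_right]
  have hc : (starRingEnd ℂ) (@inner ℂ H _ x (T x)) = @inner ℂ H _ (T x) x :=
    inner_conj_symm _ _
  rw [hi, cx_expand _ _ _ (Complex.norm_exp_ofReal_mul_I θ) t, hc]

lemma nr_le_of_seq [Nontrivial H] (T S : H →L[ℂ] H) (t θ : ℝ) (ht : 0 ≤ t)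
    (x : ℕ → H) (hx1 : ∀ n, ‖x n‖ = 1)
    (hx2 : Tendsto (fun n => ‖(@inner ℂ H _ (x n) (T (x n)))‖) atTop
      (𝓝 (numRad T)))
    (hx3 : 0 ≤ Filter.liminf
      (fun n => (Complex.exp (θ * Complex.I) *
        (@inner ℂ H _ (T (x n)) (x n) * @inner ℂ H _ (x n) (S (x n)))).re) atTop) :
    numRad T ≤ numRad (T + ((t : ℂ) * Complex.exp (θ * Complex.I)) • S) := by
  set ξ : ℂ := (t : ℂ) * Complex.exp (θ * Complex.I) with hξ
  set W := numRad (T + ξ • S) with hW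
  set r : ℕ → ℝ := fun n => (Complex.exp (θ * Complex.I) *
        (@inner ℂ H _ (T (x n)) (x n) * @inner ℂ H _ (x n) (S (x n)))).re with hr
  have hW0 : 0 ≤ W := numRad_nonneg _
  have hT0 : 0 ≤ numRad T := numRad_nonneg _
  have hsq : numRad T ^ 2 ≤ W ^ 2 := by
    refine le_of_forall_pos_le_add fun ε hε => ?_
    set c : ℝ := ε / (4 * t + 4) with hcdef
    have hc0 : 0 < c := by positivity
    have hcc : c * (4 * t + 4) = ε := div_mul_cancel₀ _ (by positivity)
    have h2 : ∀ᶠ n in atTop,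
        numRad T ^ 2 - ε / 2 < ‖(@inner ℂ H _ (x n) (T (x n)))‖ ^ 2 :=
      (hx2.pow 2).eventually (eventually_gt_nhds (by linarith))
    have hbdd : IsBoundedUnder (· ≥ ·) atTop r :=
      Filter.isBoundedUnder_of
        ⟨-(‖T‖ * ‖S‖), fun n => neg_le_of_abs_le (r_bound T S θ (hx1 n))⟩
    have h3 : ∀ᶠ n in atTop, -c < r n :=
      eventually_lt_of_lt_liminf (lt_of_lt_of_le (by linarith) hx3) hbdd
    obtain ⟨n, hn2, hn3⟩ := (h2.and h3).exists
    have hkey := key_expand T S t θ (x n)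
    have hle : ‖(@inner ℂ H _ (x n) ((T + ξ • S) (x n)))‖ ≤ W :=
      le_numRad _ (hx1 n)
    have habs2 : ‖(@inner ℂ H _ (x n) ((T + ξ • S) (x n)))‖ ^ 2 ≤ W ^ 2 :=
      pow_le_pow_left₀ (norm_nonneg _) hle 2
    have htr : 2 * t * (-c) ≤ 2 * t * r n :=
      mul_le_mul_of_nonneg_left hn3.le (by linarith)
    have hS2 : 0 ≤ t ^ 2 * ‖(@inner ℂ H _ (x n) (S (x n)))‖ ^ 2 := by positivity
    nlinarith [hn2, hkey, habs2, htr, hS2, hcc, hc0]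
  nlinarith [hsq, hW0, hT0]

end Aux

theorem numRad_BJ_orthogonal_iff_exists_seq
    {H : Type*} [NormedAddCommGroup H] [InnerProductSpace ℂ H] [CompleteSpace H]
    [Nontrivial H] (T S : H →L[ℂ] H) :
    (∀ ξ : ℂ, numRad T ≤ numRad (T + ξ • S)) ↔
      ∀ θ ∈ Set.Ico (0 : ℝ) (2 * Real.pi),
        ∃ x : ℕ → H, (∀ n, ‖x n‖ = 1) ∧
          Tendsto (fun n => ‖(@inner ℂ H _ (x n) (T (x n)))‖) atTop
            (𝓝 (numRad T)) ∧
          0 ≤ Filter.liminf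
            (fun n => (Complex.exp (θ * Complex.I) *
              (@inner ℂ H _ (T (x n)) (x n) * @inner ℂ H _ (x n) (S (x n)))).re) atTop := by
  constructor
  · -- forward direction
    intro h θ hθ
    by_cases hw : numRad T = 0
    · -- trivial case w(T) = 0 : every numerical value of T vanishes
      obtain ⟨x₀, hx₀⟩ := exists_norm_eq H zero_le_one
      have ha : @inner ℂ H _ x₀ (T x₀) = 0 := by
        have h1 := le_numRad T hx₀
        rw [hw] at h1
        have h2 := norm_nonneg (@inner ℂ H _ x₀ (T x₀))
        have h3 : ‖(@inner ℂ H _ x₀ (T x₀))‖ = 0 := le_antisymm h1 h2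
        simpa using h3
      have hT : @inner ℂ H _ (T x₀) x₀ = 0 := by
        rw [← inner_conj_symm, ha, map_zero]
      refine ⟨fun _ => x₀, fun _ => hx₀, ?_, ?_⟩
      · simpa [ha, hw] using (tendsto_const_nhds : Tendsto (fun _ : ℕ => (0:ℝ)) atTop (𝓝 0))
      · simp [hT, liminf_const]
    · have hw0 : 0 < numRad T := lt_of_le_of_ne (numRad_nonneg T) (Ne.symm hw)
      by_contra hC
      push_neg at hC
      set w := numRad T with hwdef
      -- uniform negativity near the maximizing set
      have claim : ∃ ε > 0, ∀ x : H, ‖x‖ = 1 →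
          w - ε < ‖(@inner ℂ H _ x (T x))‖ →
          (Complex.exp (θ * Complex.I) *
            (@inner ℂ H _ (T x) x * @inner ℂ H _ x (S x))).re ≤ -ε := by
        by_contra hcl
        push_neg at hcl
        choose x hx1 hx2 hx3 using fun n : ℕ => hcl (1 / (n + 1)) (by positivity)
        have hseq2 : Tendsto (fun n => ‖(@inner ℂ H _ (x n) (T (x n)))‖) atTop
            (𝓝 w) := by
          have hlow : Tendsto (fun n : ℕ => w - 1 / ((n : ℝ) + 1)) atTop (𝓝 w) := by
            have := tendsto_one_div_add_atTop_nhds_zero_nat (𝕜 := ℝ)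
            simpa using tendsto_const_nhds.sub this
          refine tendsto_of_tendsto_of_tendsto_of_le_of_le hlow tendsto_const_nhds
            (fun n => (hx2 n).le) (fun n => le_numRad T (hx1 n))
        have hseq3 : 0 ≤ Filter.liminf
            (fun n => (Complex.exp (θ * Complex.I) *
              (@inner ℂ H _ (T (x n)) (x n) * @inner ℂ H _ (x n) (S (x n)))).re) atTop := by
          have hu : Tendsto (fun n : ℕ => -(1 / ((n : ℝ) + 1))) atTop (𝓝 0) := by
            have := tendsto_one_div_add_atTop_nhds_zero_nat (𝕜 := ℝ)
            simpa using this.neg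
          have h0 : (0 : ℝ) = Filter.liminf (fun n : ℕ => -(1 / ((n : ℝ) + 1))) atTop :=
            (hu.liminf_eq).symm
          rw [h0]
          refine Filter.liminf_le_liminf (Filter.Eventually.of_forall fun n => (hx3 n).le)
            ?_ ?_
          · exact hu.isBoundedUnder_ge
          · refine Filter.IsBoundedUnder.isCoboundedUnder_ge ?_
            exact Filter.isBoundedUnder_of
              ⟨‖T‖ * ‖S‖, fun n => le_of_abs_le (r_bound T S θ (hx1 n))⟩
        exact absurd hseq3 (not_le.mpr (hC x hx1 hseq2))
      obtain ⟨ε, hε, hclaim⟩ := claim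
      set M : ℝ := ‖S‖ with hMdef
      have hM0 : 0 ≤ M := norm_nonneg S
      set t : ℝ := min (ε / (M ^ 2 + 1)) (ε / (2 * M + 2)) with htdef
      have ht0 : 0 < t := by
        apply lt_min <;> positivity
      have htm1 : t * (M ^ 2 + 1) ≤ ε := by
        rw [← le_div_iff₀ (by positivity)]
        exact min_le_left _ _
      have htm2 : t * (2 * M + 2) ≤ ε := by
        rw [← le_div_iff₀ (by positivity)]
        exact min_le_right _ _
      set ξ : ℂ := (t : ℂ) * Complex.exp (θ * Complex.I) with hξdef
      have hub : ∀ x : H, ‖x‖ = 1 →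
          ‖(@inner ℂ H _ x ((T + ξ • S) x))‖
            ≤ max (Real.sqrt (w ^ 2 - t * ε)) (w - ε / 2) := by
        intro x hx
        have ha : ‖(@inner ℂ H _ x (T x))‖ ≤ w := le_numRad T hx
        have hb : ‖(@inner ℂ H _ x (S x))‖ ≤ M := abs_inner_le_opNorm S hx
        have hb0 : 0 ≤ ‖(@inner ℂ H _ x (S x))‖ := norm_nonneg _
        have ha0 : 0 ≤ ‖(@inner ℂ H _ x (T x))‖ := norm_nonneg _
        by_cases hcase : w - ε < ‖(@inner ℂ H _ x (T x))‖
        · have hr := hclaim x hx hcase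
          have hkey := key_expand T S t θ x
          have h1 : ‖(@inner ℂ H _ x ((T + ξ • S) x))‖ ^ 2 ≤ w ^ 2 - t * ε := by
            rw [hξdef, hkey]
            nlinarith [ht0, hε, mul_le_mul ha ha ha0 (le_trans ha0 ha),
              mul_le_mul hb hb hb0 hM0,
              mul_le_mul_of_nonneg_left htm1 ht0.le,
              mul_le_mul_of_nonneg_left hr (by linarith : (0:ℝ) ≤ 2 * t),
              sq_nonneg t]
          refine le_max_of_le_left ?_
          have := Real.sqrt_le_sqrt h1
          rwa [Real.sqrt_sq (norm_nonneg _)] at this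
        · push_neg at hcase
          refine le_max_of_le_right ?_
          have hi : @inner ℂ H _ x ((T + ξ • S) x)
              = @inner ℂ H _ x (T x) + ξ * @inner ℂ H _ x (S x) := by
            simp [inner_add_right, inner_smul_right]
          have habsξ : ‖ξ‖ = t := by
            rw [hξdef, norm_mul, Complex.norm_exp_ofReal_mul_I, mul_one,
              Complex.norm_real, Real.norm_eq_abs, abs_of_nonneg ht0.le]
          calc ‖(@inner ℂ H _ x ((T + ξ • S) x))‖
              ≤ ‖(@inner ℂ H _ x (T x))‖
                + ‖(ξ * @inner ℂ H _ x (S x))‖ := by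
                rw [hi]; exact norm_add_le _ _
            _ ≤ (w - ε) + t * M := by
                rw [norm_mul, habsξ]
                have : t * ‖(@inner ℂ H _ x (S x))‖ ≤ t * M :=
                  mul_le_mul_of_nonneg_left hb ht0.le
                linarith
            _ ≤ w - ε / 2 := by nlinarith [htm2, ht0, hM0]
      have hle : numRad (T + ξ • S) ≤ max (Real.sqrt (w ^ 2 - t * ε)) (w - ε / 2) :=
        numRad_le _ hub
      have hmax : max (Real.sqrt (w ^ 2 - t * ε)) (w - ε / 2) < w := by
        refine max_lt ?_ (by linarith)
        rw [Real.sqrt_lt' hw0]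
        nlinarith [ht0, hε]
      exact absurd (h ξ) (not_le.mpr (lt_of_le_of_lt hle hmax))
  · -- backward direction
    intro h ξ
    by_cases hξ0 : ξ = 0
    · simp [hξ0]
    · set t : ℝ := ‖ξ‖ with htdef
      have ht0 : 0 < t := by
        simpa [htdef] using norm_pos_iff.mpr hξ0
      set θ : ℝ := if 0 ≤ ξ.arg then ξ.arg else ξ.arg + 2 * Real.pi with hθdef
      have hθmem : θ ∈ Set.Ico (0 : ℝ) (2 * Real.pi) := by
        rcases le_or_gt 0 ξ.arg with harg | harg
        · rw [hθdef, if_pos harg]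
          exact ⟨harg, lt_of_le_of_lt (Complex.arg_le_pi ξ) (by nlinarith [Real.pi_pos])⟩
        · rw [hθdef, if_neg (not_le.mpr harg)]
          have := Complex.neg_pi_lt_arg ξ
          constructor <;> nlinarith [Real.pi_pos]
      have hξeq : ξ = (t : ℂ) * Complex.exp (θ * Complex.I) := by
        rcases le_or_gt 0 ξ.arg with harg | harg
        · rw [hθdef, if_pos harg, htdef]
          exact (Complex.norm_mul_exp_arg_mul_I ξ).symm
        · rw [hθdef, if_neg (not_le.mpr harg), htdef]
          have : Complex.exp ((↑(ξ.arg + 2 * Real.pi)) * Complex.I)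
              = Complex.exp (ξ.arg * Complex.I) := by
            rw [Complex.ofReal_add, add_mul, Complex.exp_add]
            have h2pi : Complex.exp ((↑(2 * Real.pi)) * Complex.I) = 1 := by
              rw [Complex.ofReal_mul]
              push_cast
              rw [mul_comm (2 * (Real.pi : ℂ)) Complex.I, ← Complex.exp_two_pi_mul_I]
              ring_nf
            rw [h2pi, mul_one]
          rw [this]
          exact (Complex.norm_mul_exp_arg_mul_I ξ).symm
      obtain ⟨x, hx1, hx2, hx3⟩ := h θ hθmem
      rw [hξeq]
      exact nr_le_of_seq T S t θ ht0.le x hx1 hx2 hx3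
end
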